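/- Let S₀ and S₁ be nonempty sets. For every ν ∈ Pr(S₁), the map μ ↦ μ⊗ν from Pr(S₀) to Pr(S₀ × S₁) is continuous with respect to the weak* topologies. Moreover, if μ ∈ Pr(S₀) is finitely supported, then the map ν ↦ μ⊗ν from Pr(S₁) to Pr(S₀ × S₁) is weak*-continuous. -/

import Mathlib

open scoped Classical

/-- The free binary system (free magma) on one generator. -/
abbrev 𝕋 : Type := FreeMagma Unit

/-- The generator `1` of `𝕋`. -/
def e1 : 𝕋 := FreeMagma.of ()

/-- `#(t)`: the number of occurrences of the generator in `t`. -/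
def cnt : 𝕋 → ℕ
  | FreeMagma.of _ => 1
  | FreeMagma.mul a b => cnt a + cnt b

/-- The space `ℓ^∞(S)` of bounded real-valued functions on `S`. -/
def Bdd (S : Type*) : Type _ := {f : S → ℝ // ∃ M, ∀ s, |f s| ≤ M}

/-- Package a function as an element of `Bdd S` (junk value if unbounded). -/
noncomputable def liftBdd {S : Type*} (g : S → ℝ) : Bdd S :=
  if h : ∃ M, ∀ s, |g s| ≤ M then ⟨g, h⟩ else ⟨fun _ => 0, 0, fun _ => by simp⟩

/-- The constant function as an element of `Bdd S`. -/
def constB (S : Type*) (c : ℝ) : Bdd S := ⟨fun _ => c, |c|, fun _ => le_rfl⟩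

/-- The characteristic function of `E` as an element of `Bdd S`. -/
noncomputable def indB {S : Type*} (E : Set S) : Bdd S :=
  liftBdd (fun s => if s ∈ E then 1 else 0)

/-- `Pr S`: finitely additive probability measures on `S`, identified with the
positive normalized linear functionals on `ℓ^∞(S)`.  The weak* topology is the
subspace topology inherited from the product topology on `Bdd S → ℝ`. -/
def PrSet (S : Type*) : Set (Bdd S → ℝ) :=
  {φ | (∀ f g h : Bdd S, (∀ s, h.1 s = f.1 s + g.1 s) → φ h = φ f + φ g) ∧
       (∀ (c : ℝ) (f g : Bdd S), (∀ s, g.1 s = c * f.1 s) → φ g = c * φ f) ∧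
       (∀ f : Bdd S, (∀ s, 0 ≤ f.1 s) → 0 ≤ φ f) ∧
       φ (constB S 1) = 1}

/-- `μ(E)`: the measure of a set `E ⊆ S`. -/
noncomputable def mE {S : Type*} (φ : Bdd S → ℝ) (E : Set S) : ℝ := φ (indB E)

/-- The product `μ ⊗ ν` of finitely additive measures:
`μ⊗ν(f) = μ(x ↦ ν(y ↦ f(x,y)))`. -/
noncomputable def prodM {S T : Type*} (φ : Bdd S → ℝ) (ψ : Bdd T → ℝ) :
    Bdd (S × T) → ℝ :=
  fun f => φ (liftBdd fun x => ψ (liftBdd fun y => f.1 (x, y)))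

/-- The extension of a binary operation `op` on `S` to `Pr S`:
`μ⋆ν(f) = μ(x ↦ ν(y ↦ f(x ⋆ y)))`. -/
noncomputable def starM {S : Type*} (op : S → S → S) (φ ψ : Bdd S → ℝ) :
    Bdd S → ℝ :=
  fun f => φ (liftBdd fun x => ψ (liftBdd fun y => f.1 (op x y)))

/-- The extension of `ˆ` to `Pr 𝕋`. -/
noncomputable def hmul (φ ψ : Bdd 𝕋 → ℝ) : Bdd 𝕋 → ℝ := starM (· * ·) φ ψ

/-- Finitely supported probability measures: finite convex combinations of
point evaluations. -/
def FinSuppPr (S : Type*) : Set (Bdd S → ℝ) :=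
  {φ | ∃ (F : Finset S) (w : S → ℝ), (∀ s ∈ F, 0 ≤ w s) ∧ (∑ s ∈ F, w s) = 1 ∧
      ∀ f : Bdd S, φ f = ∑ s ∈ F, w s * f.1 s}

/-- `𝔸_n`: finitely supported probability measures concentrated on `𝕋_n`. -/
def Asets (n : ℕ) : Set (Bdd 𝕋 → ℝ) :=
  {φ | ∃ (F : Finset 𝕋) (w : 𝕋 → ℝ), (∀ t ∈ F, cnt t = n) ∧ (∀ t ∈ F, 0 ≤ w t) ∧
      (∑ t ∈ F, w t) = 1 ∧ ∀ f : Bdd 𝕋, φ f = ∑ t ∈ F, w t * f.1 t}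

/-- The extension of `+` on `ℕ` to ultrafilters: `A ∈ U+V` iff
`{m : {n : m+n ∈ A} ∈ V} ∈ U`. -/
noncomputable def addU (U V : Ultrafilter ℕ) : Ultrafilter ℕ :=
  U.bind fun m => V.map fun n => m + n

/-- `𝔸_U`: the `U`-limit of the sets `𝔸_m`. -/
def AU (U : Ultrafilter ℕ) : Set (Bdd 𝕋 → ℝ) :=
  {μ | μ ∈ PrSet 𝕋 ∧ ∀ W : Set (Bdd 𝕋 → ℝ), IsOpen W → μ ∈ W →
      {m : ℕ | (W ∩ Asets m).Nonempty} ∈ U}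

/-- The extension of `ˆ` to ultrafilters on `𝕋`: `E ∈ UˆV` iff
`{u : {v : uˆv ∈ E} ∈ V} ∈ U`. -/
noncomputable def umul (U V : Ultrafilter 𝕋) : Ultrafilter 𝕋 :=
  U.bind fun u => V.map fun v => u * v

/-- Substitution of measures into a term `t`:
`t(μ_0,…,μ_{m-1})(f)` is the nested integral
`μ_0(x_0 ↦ ⋯ μ_{m-1}(x_{m-1} ↦ f(t(x⃗)))⋯)`. -/
noncomputable def substM : 𝕋 → List (Bdd 𝕋 → ℝ) → (Bdd 𝕋 → ℝ)
  | FreeMagma.of _, μs => μs.headI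
  | FreeMagma.mul a b, μs =>
      hmul (substM a (μs.take (cnt a))) (substM b (μs.drop (cnt a)))

/-- `t_k`: iteratively remove the carets of `t` involving only leaves of index
greater than `k`. -/
def tk : 𝕋 → ℕ → 𝕋
  | FreeMagma.of _, _ => e1
  | FreeMagma.mul a b, k => if k < cnt a then tk a k * e1 else a * tk b (k - cnt a)

/-- `l_k(t) = #(t_k) - 2` (truncated subtraction). -/
def lk (t : 𝕋) (k : ℕ) : ℕ := cnt (tk t k) - 2

/-- The subterm `t/σ` of `t` at address `σ` (`false` = left/`0`, `true` = right/`1`). -/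
def subT : 𝕋 → List Bool → Option 𝕋
  | t, [] => some t
  | FreeMagma.of _, _ :: _ => none
  | FreeMagma.mul a b, c :: σ => if c then subT b σ else subT a σ

/-- `σ <_lex ς` for incompatible binary sequences: at the first coordinate where
they differ, `σ` has `0` and `ς` has `1`. -/
def lexLT (σ ς : List Bool) : Prop :=
  ∃ p σ' ς', σ = p ++ (false :: σ') ∧ ς = p ++ (true :: ς')

/-- `x₀·E`. -/
def x0E (E : Set 𝕋) : Set 𝕋 :=
  {x | ∃ a b c : 𝕋, x = a * (b * c) ∧ (a * b) * c ∈ E}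

/-- `x₁·E`. -/
def x1E (E : Set 𝕋) : Set 𝕋 :=
  {x | ∃ s a b c : 𝕋, x = s * (a * (b * c)) ∧ s * ((a * b) * c) ∈ E}

/-- `u_σ` for a nonempty finite binary sequence `σ`. -/
def uSeq : List Bool → 𝕋
  | [] => e1
  | [_] => e1
  | b :: σ => if b then e1 * uSeq σ else uSeq σ * e1

/-- `a ≪ b`: for some `p`, `#(a) < 2^p` and `2^p` divides `#(b)`. -/
def ll (a b : 𝕋) : Prop := ∃ p : ℕ, cnt a < 2 ^ p ∧ 2 ^ p ∣ cnt b

/-- `r↾n`: the first `n` values of `r` as a finite binary sequence. -/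
def rList (r : ℕ → Bool) (n : ℕ) : List Bool := (List.range n).map r

/-- The map `h_r : 𝕋 → 𝕋`. -/
noncomputable def hr (r : ℕ → Bool) : 𝕋 → 𝕋
  | FreeMagma.of _ => uSeq (rList r 1)
  | FreeMagma.mul a b =>
      if ll a b then hr r a * hr r b else uSeq (rList r (cnt a + cnt b))

/-- The action of `h_r` on measures: `h_r(μ)(f) = μ(f ∘ h_r)`. -/
noncomputable def hrM (r : ℕ → Bool) (φ : Bdd 𝕋 → ℝ) : Bdd 𝕋 → ℝ :=
  fun f => φ (liftBdd fun t => f.1 (hr r t))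

/-- `lev`: `l(1) = 0`, `l(aˆb) = l(a) + 1`. -/
def lev : 𝕋 → ℕ
  | FreeMagma.of _ => 0
  | FreeMagma.mul a _ => lev a + 1

/-- `C` is closed under `ˆ`. -/
def HClosed (C : Set (Bdd 𝕋 → ℝ)) : Prop := ∀ μ ∈ C, ∀ ν ∈ C, hmul μ ν ∈ C

lemma pr_abs_le {T : Type*} {ν : Bdd T → ℝ} (hν : ν ∈ PrSet T) (h : Bdd T)
    (M : ℝ) (hb : ∀ y, |h.1 y| ≤ M) : |ν h| ≤ M := by
  obtain ⟨hadd, hsmul, hpos, hone⟩ := hν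
  have hM : ν (constB T M) = M := by
    have := hsmul M (constB T 1) (constB T M) (fun s => by simp [constB])
    rw [this, hone, mul_one]
  have h1 : ν h ≤ M := by
    have bnd : ∀ y, |M - h.1 y| ≤ |M| + M := fun y => by
      have h1 := abs_le.mp (hb y)
      have h2 := le_abs_self M; have h3 := neg_abs_le M
      rw [abs_le]; constructor <;> linarith
    set d : Bdd T := ⟨fun y => M - h.1 y, |M| + M, bnd⟩ with hd
    have hsum := hadd h d (constB T M) (fun s => by simp [hd, constB])
    have hdpos : 0 ≤ ν d := hpos d (fun y => by
      have := abs_le.mp (hb y); simp [hd]; linarith)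
    linarith [hsum, hM]
  have h2 : -M ≤ ν h := by
    have bnd : ∀ y, |h.1 y + M| ≤ |M| + M := fun y => by
      have h1 := abs_le.mp (hb y)
      have h2 := le_abs_self M; have h3 := neg_abs_le M
      rw [abs_le]; constructor <;> linarith
    set d : Bdd T := ⟨fun y => h.1 y + M, |M| + M, bnd⟩ with hd
    have hsum := hadd h (constB T M) d (fun s => by simp [hd, constB])
    have hdpos : 0 ≤ ν d := hpos d (fun y => by
      have := abs_le.mp (hb y); simp [hd]; linarith)
    linarith [hsum, hM]
  exact abs_le.mpr ⟨h2, h1⟩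

/-- for `ν ∈ Pr(S₁)`, `μ ↦ μ⊗ν` is weak*-continuous on `Pr(S₀)`;
and for finitely supported `μ ∈ Pr(S₀)`, `ν ↦ μ⊗ν` is weak*-continuous on `Pr(S₁)`. -/
theorem prod_measure_continuous (S₀ S₁ : Type) [Nonempty S₀] [Nonempty S₁] :
    (∀ ν : Bdd S₁ → ℝ, ν ∈ PrSet S₁ →
      ContinuousOn (fun μ : Bdd S₀ → ℝ => prodM μ ν) (PrSet S₀)) ∧
    (∀ μ : Bdd S₀ → ℝ, μ ∈ PrSet S₀ → μ ∈ FinSuppPr S₀ →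
      ContinuousOn (fun ν : Bdd S₁ → ℝ => prodM μ ν) (PrSet S₁)) := by
  constructor
  · intro ν hν
    apply Continuous.continuousOn
    apply continuous_pi
    intro f
    exact continuous_apply _
  · intro μ hμ hfs
    obtain ⟨F, w, hw0, hw1, hrep⟩ := hfs
    have hcont : Continuous (fun ν : Bdd S₁ → ℝ =>
        fun f : Bdd (S₀ × S₁) => ∑ s ∈ F, w s * ν (liftBdd fun y => f.1 (s, y))) := by
      apply continuous_pi
      intro f
      exact continuous_finset_sum F (fun s _ => continuous_const.mul (continuous_apply _))
    apply ContinuousOn.congr hcont.continuousOn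
    intro ν hν
    funext f
    obtain ⟨M, hMf⟩ := f.2
    have hinner : ∀ x : S₀, (liftBdd fun y => f.1 (x, y)) =
        ⟨fun y => f.1 (x, y), M, fun y => hMf (x, y)⟩ := by
      intro x
      rw [liftBdd]; exact dif_pos ⟨M, fun y => hMf (x, y)⟩
    have hG : ∀ x : S₀, |ν (liftBdd fun y => f.1 (x, y))| ≤ M := by
      intro x
      rw [hinner x]
      exact pr_abs_le hν _ M (fun y => hMf (x, y))
    have hGlift : (liftBdd fun x => ν (liftBdd fun y => f.1 (x, y))) =
        ⟨fun x => ν (liftBdd fun y => f.1 (x, y)), M, hG⟩ := by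
      rw [liftBdd]; exact dif_pos ⟨M, hG⟩
    show prodM μ ν f = _
    rw [prodM, hGlift]; exact hrep _
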